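/- Fix M > 0, d ∈ ℝ, h ≥ 0, and let α_min = φ(d, h) = −2d/(h + √(h² + 2M|d|)) (with φ(0,0) = 0) be the global minimizer of P(α) = dα + (h/2)α² + (M/6)|α|³. Let α′ ∈ ℝ have the same sign as α_min (α′·α_min ≥ 0). Then 0 ≤ P(α′) − P(α_min) ≤ (1/2)·(α_min − α′)²·(h + M|α_min| + (M/3)|α_min − α′|). -/

import Mathlib

/-- The one-dimensional cubic-regularized second-order model
`P(α; d, h) = d·α + (h/2)·α² + (M/6)·|α|³`. -/
noncomputable def cubicModel (M d h α : ℝ) : ℝ :=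
  d * α + h / 2 * α ^ 2 + M / 6 * |α| ^ 3

/-- The global minimizer `φ(d, h) = −2d/(h + √(h² + 2M|d|))` of the cubic model
(understood as `0` when `d = 0` and `h = 0`, since in Lean division by zero is zero). -/
noncomputable def cubicMin (M d h : ℝ) : ℝ :=
  -2 * d / (h + Real.sqrt (h ^ 2 + 2 * M * |d|))

lemma cubicCore (M h a t : ℝ) (hM : 0 < M) (hh : 0 ≤ h) (ha : 0 ≤ a) (ht : -a ≤ t) :
    0 ≤ t ^ 2 * (h + M * a) / 2 + M * t ^ 3 / 6 ∧
    t ^ 2 * (h + M * a) / 2 + M * t ^ 3 / 6 ≤ 1 / 2 * t ^ 2 * (h + M * a + M / 3 * |t|) := by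
  constructor
  · nlinarith [mul_nonneg (mul_nonneg hM.le (sq_nonneg t)) (by linarith : (0:ℝ) ≤ t + a),
      mul_nonneg (mul_nonneg hM.le ha) (sq_nonneg t), mul_nonneg hh (sq_nonneg t)]
  · nlinarith [mul_nonneg (mul_nonneg hM.le (sq_nonneg t))
      (by linarith [le_abs_self t] : (0:ℝ) ≤ |t| - t)]

lemma cubicFoc (M d h : ℝ) (hM : 0 < M) (hh : 0 ≤ h) :
    d + h * cubicMin M d h + M / 2 * cubicMin M d h * |cubicMin M d h| = 0 := by
  by_cases hd : d = 0
  · simp [cubicMin, hd]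
  · set s := Real.sqrt (h ^ 2 + 2 * M * |d|) with hsdef
    have hpos : 0 < h ^ 2 + 2 * M * |d| := by
      have := abs_pos.mpr hd; positivity
    have hs : 0 < s := Real.sqrt_pos.mpr hpos
    have hs2 : s ^ 2 = h ^ 2 + 2 * M * |d| := Real.sq_sqrt hpos.le
    have hhs : 0 < h + s := by linarith
    have habs : |cubicMin M d h| = 2 * |d| / (h + s) := by
      rw [cubicMin, ← hsdef, abs_div, abs_of_pos hhs]
      congr 1
      rw [abs_mul]
      norm_num
    have hval : cubicMin M d h = -2 * d / (h + s) := by rw [cubicMin, ← hsdef]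
    rw [habs, hval]
    field_simp
    linear_combination d * hs2

/-- Perturbation of `P` near its minimum: for `M > 0`, `d ∈ ℝ`, `h ≥ 0`, with
`α_min = φ(d, h)` the global minimizer of `P(α) = dα + (h/2)α² + (M/6)|α|³`, and `α′ ∈ ℝ` of the
same sign as `α_min`, one has
`0 ≤ P(α′) − P(α_min) ≤ (1/2)(α_min − α′)²(h + M|α_min| + (M/3)|α_min − α′|)`. -/
theorem cubicModel_perturbation_near_min (M : ℝ) (hM : 0 < M) (d h : ℝ) (hh : 0 ≤ h)
    (α' : ℝ) (hsign : 0 ≤ α' * cubicMin M d h) :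
    0 ≤ cubicModel M d h α' - cubicModel M d h (cubicMin M d h) ∧
    cubicModel M d h α' - cubicModel M d h (cubicMin M d h) ≤
      1 / 2 * (cubicMin M d h - α') ^ 2 *
        (h + M * |cubicMin M d h| + M / 3 * |cubicMin M d h - α'|) := by
  set a := cubicMin M d h with hadef
  have hfoc := cubicFoc M d h hM hh
  rw [← hadef] at hfoc
  have hcases : (0 ≤ a ∧ 0 ≤ α') ∨ (a ≤ 0 ∧ α' ≤ 0) := by
    rcases le_total 0 α' with h2 | h2 <;> rcases le_total 0 a with h1 | h1
    · exact Or.inl ⟨h1, h2⟩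
    · have h0 : α' * a = 0 := le_antisymm (by nlinarith) hsign
      rcases mul_eq_zero.mp h0 with h3 | h3
      · exact Or.inr ⟨h1, le_of_eq h3⟩
      · exact Or.inl ⟨le_of_eq h3.symm, h2⟩
    · have h0 : α' * a = 0 := le_antisymm (by nlinarith) hsign
      rcases mul_eq_zero.mp h0 with h3 | h3
      · exact Or.inl ⟨h1, le_of_eq h3.symm⟩
      · exact Or.inr ⟨le_of_eq h3, h2⟩
    · exact Or.inr ⟨h1, h2⟩
  have hsq : (a - α') ^ 2 = (α' - a) ^ 2 := by ring
  have habs' : |a - α'| = |α' - a| := abs_sub_comm a α'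
  rcases hcases with ⟨ha, hα⟩ | ⟨ha, hα⟩
  · have hfe : d + h * a + M / 2 * a * a = 0 := by rwa [abs_of_nonneg ha] at hfoc
    have hid : cubicModel M d h α' - cubicModel M d h a =
        (α' - a) ^ 2 * (h + M * a) / 2 + M * (α' - a) ^ 3 / 6 := by
      unfold cubicModel
      rw [abs_of_nonneg ha, abs_of_nonneg hα]
      linear_combination (α' - a) * hfe
    obtain ⟨hc1, hc2⟩ := cubicCore M h a (α' - a) hM hh ha (by linarith)
    rw [hid, hsq, habs', abs_of_nonneg ha]
    exact ⟨hc1, hc2⟩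
  · have hfe : d + h * a - M / 2 * a * a = 0 := by
      rw [abs_of_nonpos ha] at hfoc; linarith [hfoc]
    have hid : cubicModel M d h α' - cubicModel M d h a =
        (-(α' - a)) ^ 2 * (h + M * (-a)) / 2 + M * (-(α' - a)) ^ 3 / 6 := by
      unfold cubicModel
      rw [abs_of_nonpos ha, abs_of_nonpos hα]
      linear_combination (α' - a) * hfe
    obtain ⟨hc1, hc2⟩ := cubicCore M h (-a) (-(α' - a)) hM hh (by linarith) (by linarith)
    rw [hid, hsq, habs', abs_of_nonpos ha]
    constructor
    · exact hc1
    · calc _ ≤ 1 / 2 * (-(α' - a)) ^ 2 * (h + M * (-a) + M / 3 * |-(α' - a)|) := hc2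
        _ = 1 / 2 * (α' - a) ^ 2 * (h + M * -a + M / 3 * |α' - a|) := by
          rw [abs_neg]; ring
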